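/- Every separable Hausdorff continuum with only countably many non-cut points is a dendrite (i.e., a metrizable compact connected space in which every two distinct points are separated by a third point, equivalently a locally connected metrizable continuum containing no simple closed curve). -/

import Mathlib

open Set TopologicalSpace

set_option linter.unusedSectionVars false

namespace Stmt15Aux

variable {X : Type*} [TopologicalSpace X] [CompactSpace X] [T2Space X] [ConnectedSpace X]

/-- A splitting of the complement of a point `c` into two nonempty disjoint open sets. -/
def SplitPt (c : X) (U V : Set X) : Prop :=
  IsOpen U ∧ IsOpen V ∧ Disjoint U V ∧ U ∪ V = ({c}ᶜ : Set X) ∧ U.Nonempty ∧ V.Nonempty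

namespace SplitPt

variable {c : X} {U V : Set X}

theorem isOpen_left (h : SplitPt c U V) : IsOpen U := h.1
theorem isOpen_right (h : SplitPt c U V) : IsOpen V := h.2.1
theorem disjoint (h : SplitPt c U V) : Disjoint U V := h.2.2.1
theorem union_eq (h : SplitPt c U V) : U ∪ V = ({c}ᶜ : Set X) := h.2.2.2.1
theorem nonempty_left (h : SplitPt c U V) : U.Nonempty := h.2.2.2.2.1
theorem nonempty_right (h : SplitPt c U V) : V.Nonempty := h.2.2.2.2.2

theorem symm (h : SplitPt c U V) : SplitPt c V U :=
  ⟨h.isOpen_right, h.isOpen_left, h.disjoint.symm, by rw [union_comm]; exact h.union_eq,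
    h.nonempty_right, h.nonempty_left⟩

theorem not_mem_left (h : SplitPt c U V) : c ∉ U := by
  intro hc
  have h1 : c ∈ U ∪ V := mem_union_left V hc
  rw [h.union_eq] at h1
  exact h1 rfl

theorem not_mem_right (h : SplitPt c U V) : c ∉ V := h.symm.not_mem_left

theorem mem_or {x : X} (h : SplitPt c U V) (hx : x ≠ c) : x ∈ U ∨ x ∈ V := by
  have h1 : x ∈ U ∪ V := by rw [h.union_eq]; exact hx
  exact h1

theorem compl_right (h : SplitPt c U V) : U ∪ {c} = Vᶜ := by
  ext x
  simp only [mem_union, mem_singleton_iff, mem_compl_iff]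
  constructor
  · rintro (hx | rfl)
    · exact fun hxV => h.disjoint.ne_of_mem hx hxV rfl
    · exact h.not_mem_right
  · intro hx
    by_cases hxc : x = c
    · exact Or.inr hxc
    · exact Or.inl ((h.mem_or hxc).resolve_right hx)

theorem isClosed_side (h : SplitPt c U V) : IsClosed (U ∪ {c}) := by
  rw [h.compl_right]
  exact h.isOpen_right.isClosed_compl

theorem mem_closure_left (h : SplitPt c U V) : c ∈ closure U := by
  by_contra hc
  have h1 : closure U ⊆ U ∪ {c} := h.isClosed_side.closure_subset_iff.mpr subset_union_left
  have h2 : closure U = U := by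
    apply subset_antisymm _ subset_closure
    intro x hx
    rcases h1 hx with hx' | hx'
    · exact hx'
    · exact absurd (hx' ▸ hx) hc
  have h3 : IsClopen U := ⟨h2 ▸ isClosed_closure, h.isOpen_left⟩
  rcases isClopen_iff.mp h3 with he | hu
  · exact h.nonempty_left.ne_empty he
  · obtain ⟨v, hv⟩ := h.nonempty_right
    exact h.disjoint.ne_of_mem (hu ▸ (mem_univ v)) hv rfl

theorem isPreconnected_side (h : SplitPt c U V) : IsPreconnected (U ∪ {c}) := by
  set S := U ∪ {c} with hS
  have hScl : IsClosed S := h.isClosed_side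
  have key : ∀ u v : Set X, IsOpen u → IsOpen v → S ⊆ u ∪ v → (S ∩ v).Nonempty →
      S ∩ (u ∩ v) = ∅ → c ∈ u → False := by
    intro u v hu hv hcov hnv hemp hcu
    have hcS : c ∈ S := mem_union_right _ rfl
    have hcv : c ∉ v := fun hcv =>
      (notMem_empty c) (hemp ▸ (⟨hcS, hcu, hcv⟩ : c ∈ S ∩ (u ∩ v)))
    have hBv : S ∩ v = U ∩ v := by
      ext t
      constructor
      · rintro ⟨ht | ht, htv⟩
        · exact ⟨ht, htv⟩
        · exact absurd (ht ▸ htv : c ∈ v) hcv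
      · rintro ⟨htU, htv⟩
        exact ⟨Or.inl htU, htv⟩
    have hBopen : IsOpen (S ∩ v) := hBv ▸ h.isOpen_left.inter hv
    have hBc : S ∩ v = S ∩ uᶜ := by
      ext t
      constructor
      · rintro ⟨htS, htv⟩
        refine ⟨htS, fun htu => (notMem_empty t) (hemp ▸ (⟨htS, htu, htv⟩ : t ∈ S ∩ (u ∩ v)))⟩
      · rintro ⟨htS, htu⟩
        exact ⟨htS, (hcov htS).resolve_left htu⟩
    have hBclosed : IsClosed (S ∩ v) := hBc ▸ hScl.inter (isClosed_compl_iff.mpr hu)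
    rcases isClopen_iff.mp ⟨hBclosed, hBopen⟩ with he | huniv
    · exact hnv.ne_empty he
    · have : c ∈ S ∩ v := huniv ▸ mem_univ c
      exact hcv this.2
  intro u v hu hv hcov h1 h2
  by_contra hne
  have hemp : S ∩ (u ∩ v) = ∅ := not_nonempty_iff_eq_empty.mp hne
  rcases hcov (mem_union_right _ rfl : c ∈ S) with hcu | hcv
  · exact absurd (key u v hu hv hcov h2 hemp hcu) id
  · refine absurd (key v u hv hu (by rwa [union_comm]) h1 ?_ hcv) id
    rw [inter_comm v u]; exact hemp

end SplitPt

theorem splitPt_of_not_preconn {x : X} (h : ¬ IsPreconnected ({x}ᶜ : Set X)) :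
    ∃ U V : Set X, SplitPt x U V := by
  unfold IsPreconnected at h
  push_neg at h
  obtain ⟨u, v, hu, hv, hcov, hnu, hnv, hemp⟩ := h
  refine ⟨{x}ᶜ ∩ u, {x}ᶜ ∩ v, isOpen_compl_singleton.inter hu, isOpen_compl_singleton.inter hv,
    ?_, ?_, ?_, ?_⟩
  · rw [Set.disjoint_iff_inter_eq_empty]
    have : ({x}ᶜ ∩ u) ∩ ({x}ᶜ ∩ v) = {x}ᶜ ∩ (u ∩ v) := by
      ext t; constructor
      · rintro ⟨⟨ht1, ht2⟩, ⟨_, ht3⟩⟩; exact ⟨ht1, ht2, ht3⟩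
      · rintro ⟨ht1, ht2, ht3⟩; exact ⟨⟨ht1, ht2⟩, ⟨ht1, ht3⟩⟩
    rw [this]
    exact hemp
  · rw [← inter_union_distrib_left]
    exact inter_eq_self_of_subset_left hcov
  · obtain ⟨t, ht1, ht2⟩ := hnu; exact ⟨t, ht1, ht2⟩
  · obtain ⟨t, ht1, ht2⟩ := hnv; exact ⟨t, ht1, ht2⟩

theorem subset_side {e : X} {P Q S : Set X} (h : SplitPt e P Q) (hS : IsPreconnected S)
    (heS : e ∉ S) {w : X} (hwS : w ∈ S) (hwP : w ∈ P) : S ⊆ P := by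
  apply hS.subset_left_of_subset_union h.isOpen_left h.isOpen_right h.disjoint
  · rw [h.union_eq]
    exact fun y hy hye => heS (mem_singleton_iff.mp hye ▸ hy)
  · exact ⟨w, hwS, hwP⟩



theorem rel_closed {K OA OB : Set X} {x : X} (hK : IsClosed K) (hOB : IsOpen OB)
    (hAB : ((K ∩ OA) \ {x}) ∪ ((K ∩ OB) \ {x}) = K \ {x})
    (hd : ((K ∩ OA) \ {x}) ∩ ((K ∩ OB) \ {x}) = ∅) (hx : x ∈ K) :
    IsClosed (((K ∩ OA) \ {x}) ∪ {x}) := by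
  set A := (K ∩ OA) \ {x} with hA
  set B := (K ∩ OB) \ {x} with hB
  apply isClosed_of_closure_subset
  intro y hy
  rw [closure_union, closure_singleton] at hy
  rcases hy with hy | hy
  swap
  · exact Or.inr hy
  have hyK : y ∈ K := hK.closure_subset_iff.mpr (fun t ht => ht.1.1) hy
  by_cases hyx : y = x
  · exact Or.inr (by simp [hyx])
  have hyAB : y ∈ A ∪ B := by rw [hAB]; exact ⟨hyK, hyx⟩
  rcases hyAB with h | h
  · exact Or.inl h
  · exfalso
    have hOBA : OB ∩ A = ∅ := by
      ext t
      simp only [mem_inter_iff, mem_empty_iff_false, iff_false, not_and]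
      intro htOB htA
      exact (notMem_empty t) (hd ▸ (⟨htA, ⟨htA.1.1, htOB⟩, htA.2⟩ : t ∈ A ∩ B))
    obtain ⟨t, htOB, htA⟩ := mem_closure_iff.mp hy OB hOB h.1.2
    exact (notMem_empty t) (hOBA ▸ (⟨htOB, htA⟩ : t ∈ OB ∩ A))

theorem rel_preconn {K OA OB : Set X} {x : X} (hK : IsClosed K) (hKpc : IsPreconnected K)
    (hOA : IsOpen OA) (hOB : IsOpen OB)
    (hAB : ((K ∩ OA) \ {x}) ∪ ((K ∩ OB) \ {x}) = K \ {x})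
    (hd : ((K ∩ OA) \ {x}) ∩ ((K ∩ OB) \ {x}) = ∅) (hx : x ∈ K) :
    IsPreconnected (((K ∩ OA) \ {x}) ∪ {x}) := by
  set A := (K ∩ OA) \ {x} with hA
  set S := A ∪ {x} with hSdef
  have hScl : IsClosed S := rel_closed hK hOB hAB hd hx
  have key : ∀ u v : Set X, IsOpen u → IsOpen v → S ⊆ u ∪ v → (S ∩ v).Nonempty →
      S ∩ (u ∩ v) = ∅ → x ∈ u → False := by
    intro u v hu hv hcov hnv hemp hxu
    have hxS : x ∈ S := Or.inr rfl
    have hxv : x ∉ v := fun hxv =>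
      (notMem_empty x) (hemp ▸ (⟨hxS, hxu, hxv⟩ : x ∈ S ∩ (u ∩ v)))
    have hBad_sub : S ∩ v ⊆ A ∩ v := by
      rintro t ⟨ht | ht, htv⟩
      · exact ⟨ht, htv⟩
      · exact absurd (ht ▸ htv : x ∈ v) hxv
    have hBadcl : IsClosed (S ∩ v) := by
      have heq : S ∩ v = S ∩ uᶜ := by
        ext t
        constructor
        · rintro ⟨htS, htv⟩
          exact ⟨htS, fun htu => (notMem_empty t) (hemp ▸ (⟨htS, htu, htv⟩ : t ∈ S ∩ (u ∩ v)))⟩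
        · rintro ⟨htS, htu⟩
          exact ⟨htS, (hcov htS).resolve_left htu⟩
      rw [heq]
      exact hScl.inter (isClosed_compl_iff.mpr hu)
    have h1 : IsOpen (OA ∩ v ∩ {x}ᶜ) := (hOA.inter hv).inter isOpen_compl_singleton
    have h2 : IsOpen ((S ∩ v)ᶜ) := hBadcl.isOpen_compl
    have hKcov : K ⊆ (OA ∩ v ∩ {x}ᶜ) ∪ (S ∩ v)ᶜ := by
      intro t htK
      by_cases hts : t ∈ S ∩ v
      · have htA : t ∈ A ∩ v := hBad_sub hts
        exact Or.inl ⟨⟨htA.1.1.2, htA.2⟩, htA.1.2⟩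
      · exact Or.inr hts
    have hKu : (K ∩ (OA ∩ v ∩ {x}ᶜ)).Nonempty := by
      obtain ⟨t, ht⟩ := hnv
      have htA : t ∈ A ∩ v := hBad_sub ht
      exact ⟨t, htA.1.1.1, ⟨htA.1.1.2, htA.2⟩, htA.1.2⟩
    have hKv : (K ∩ (S ∩ v)ᶜ).Nonempty := ⟨x, hx, fun hxs => hxv hxs.2⟩
    obtain ⟨t, htK, htuv⟩ := hKpc _ _ h1 h2 hKcov hKu hKv
    exact htuv.2 ⟨Or.inl ⟨⟨htK, htuv.1.1.1⟩, htuv.1.2⟩, htuv.1.1.2⟩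
  intro u v hu hv hcov h1 h2
  by_contra hne
  have hemp : S ∩ (u ∩ v) = ∅ := not_nonempty_iff_eq_empty.mp hne
  rcases hcov (Or.inr rfl : x ∈ S) with hxu | hxv
  · exact absurd (key u v hu hv hcov h2 hemp hxu) id
  · refine absurd (key v u hv hu (by rwa [union_comm]) h1 ?_ hxv) id
    rw [inter_comm v u]; exact hemp


theorem exists_noncut {K : Set X} (hKcl : IsClosed K) (hKpc : IsPreconnected K)
    {c k : X} (hc : c ∈ K) (hk : k ∈ K) (hkc : k ≠ c) :
    ∃ z ∈ K, z ≠ c ∧ IsPreconnected (K \ {z}) := by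
  by_contra hcon
  push_neg at hcon
  have hdata : ∀ z : X, z ∈ K → z ≠ c → ∃ OA OB : Set X,
      IsOpen OA ∧ IsOpen OB ∧
      ((K ∩ OA) \ {z}) ∪ ((K ∩ OB) \ {z}) = K \ {z} ∧
      ((K ∩ OA) \ {z}) ∩ ((K ∩ OB) \ {z}) = ∅ ∧
      c ∈ (K ∩ OA) \ {z} ∧ ((K ∩ OB) \ {z}).Nonempty := by
    intro z hz hzc
    have h := hcon z hz hzc
    unfold IsPreconnected at h
    push_neg at h
    obtain ⟨u, v, hu, hv, hcov, hnu, hnv, hemp⟩ := h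
    have hcz : c ∈ K \ {z} := ⟨hc, fun h' => hzc (mem_singleton_iff.mp h').symm⟩
    have heq : ∀ w : Set X, (K ∩ w) \ {z} = (K \ {z}) ∩ w := by
      intro w; ext t
      constructor
      · rintro ⟨⟨ht1, ht2⟩, ht3⟩; exact ⟨⟨ht1, ht3⟩, ht2⟩
      · rintro ⟨⟨ht1, ht3⟩, ht2⟩; exact ⟨⟨ht1, ht2⟩, ht3⟩
    have hU : ((K ∩ u) \ {z}) ∪ ((K ∩ v) \ {z}) = K \ {z} := by
      rw [heq, heq, ← inter_union_distrib_left]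
      exact inter_eq_self_of_subset_left hcov
    have hD : ((K ∩ u) \ {z}) ∩ ((K ∩ v) \ {z}) = ∅ := by
      rw [heq, heq]
      have : ((K \ {z}) ∩ u) ∩ ((K \ {z}) ∩ v) = (K \ {z}) ∩ (u ∩ v) := by
        ext t; constructor
        · rintro ⟨⟨ht1, ht2⟩, ⟨_, ht3⟩⟩; exact ⟨ht1, ht2, ht3⟩
        · rintro ⟨ht1, ht2, ht3⟩; exact ⟨⟨ht1, ht2⟩, ⟨ht1, ht3⟩⟩
      rw [this, hemp]
    rcases hcov hcz with hcu | hcv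
    · refine ⟨u, v, hu, hv, hU, hD, ⟨⟨hc, hcu⟩, hcz.2⟩, ?_⟩
      obtain ⟨t, ht1, ht2⟩ := hnv
      exact ⟨t, ⟨ht1.1, ht2⟩, ht1.2⟩
    · refine ⟨v, u, hv, hu, by rw [union_comm]; exact hU, by rw [inter_comm]; exact hD,
        ⟨⟨hc, hcv⟩, hcz.2⟩, ?_⟩
      obtain ⟨t, ht1, ht2⟩ := hnu
      exact ⟨t, ⟨ht1.1, ht2⟩, ht1.2⟩
  choose! OA OB hOA hOB hABu hABd hcA hBne using hdata
  classical
  set A : X → Set X := fun z => (K ∩ OA z) \ {z} with hAdef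
  set B : X → Set X := fun z => (K ∩ OB z) \ {z} with hBdef
  set 𝒮 : Set (Set X) := {S | ∃ z, z ∈ K ∧ z ≠ c ∧ S = B z ∪ {z}} with h𝒮
  have hmem : ∀ z, z ∈ K → z ≠ c → (B z ∪ {z}) ∈ 𝒮 := fun z hz hzc => ⟨z, hz, hzc, rfl⟩
  have hclosed : ∀ z, z ∈ K → z ≠ c → IsClosed (B z ∪ {z}) := by
    intro z hz hzc
    exact rel_closed hKcl (hOA z hz hzc)
      (by rw [union_comm]; exact hABu z hz hzc)
      (by rw [inter_comm]; exact hABd z hz hzc) hz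
  have hsubK : ∀ z, B z ∪ {z} ⊆ K ∪ {z} := by
    intro z t ht
    rcases ht with ht | ht
    · exact Or.inl ht.1.1
    · exact Or.inr ht
  have hsubK' : ∀ z, z ∈ K → B z ∪ {z} ⊆ K := by
    intro z hz t ht
    rcases hsubK z ht with h | h
    · exact h
    · exact mem_singleton_iff.mp h ▸ hz
  have hcnotB : ∀ z, z ∈ K → z ≠ c → c ∉ B z ∪ {z} := by
    intro z hz hzc hc'
    rcases hc' with h | h
    · exact (notMem_empty c) ((hABd z hz hzc) ▸ (⟨hcA z hz hzc, h⟩ : c ∈ A z ∩ B z))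
    · exact hzc (mem_singleton_iff.mp h).symm
  have hApre : ∀ z, z ∈ K → z ≠ c → IsPreconnected (A z ∪ {z}) := fun z hz hzc =>
    rel_preconn hKcl hKpc (hOA z hz hzc) (hOB z hz hzc) (hABu z hz hzc) (hABd z hz hzc) hz
  have nest : ∀ z t, z ∈ K → z ≠ c → t ∈ B z → B t ∪ {t} ⊆ B z := by
    intro z t hz hzc htB
    have htK : t ∈ K := htB.1.1
    have htc : t ≠ c := fun h => hcnotB z hz hzc (Or.inl (h ▸ htB))
    have htz : t ≠ z := htB.2
    have hsub : A z ∪ {z} ⊆ OA t ∪ OB t := by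
      intro s hs
      have hsK : s ∈ K \ {t} := by
        rcases hs with hsA | hsz
        · refine ⟨hsA.1.1, fun hst => ?_⟩
          rw [mem_singleton_iff] at hst
          subst hst
          exact (notMem_empty s) ((hABd z hz hzc) ▸ (⟨hsA, htB⟩ : s ∈ A z ∩ B z))
        · rw [mem_singleton_iff] at hsz
          subst hsz
          exact ⟨hz, fun h => htz (mem_singleton_iff.mp h).symm⟩
      rw [← hABu t htK htc] at hsK
      rcases hsK with h | h
      · exact Or.inl h.1.2
      · exact Or.inr h.1.2
    have hdisj2 : (A z ∪ {z}) ∩ (OA t ∩ OB t) = ∅ := by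
      ext s
      simp only [mem_inter_iff, mem_empty_iff_false, iff_false, not_and]
      intro hsS hsOA hsOB
      have hsK : s ∈ K \ {t} := by
        rcases hsS with hsA | hsz
        · refine ⟨hsA.1.1, fun hst => ?_⟩
          rw [mem_singleton_iff] at hst
          subst hst
          exact (notMem_empty s) ((hABd z hz hzc) ▸ (⟨hsA, htB⟩ : s ∈ A z ∩ B z))
        · rw [mem_singleton_iff] at hsz
          subst hsz
          exact ⟨hz, fun h => htz (mem_singleton_iff.mp h).symm⟩
      exact (notMem_empty s) ((hABd t htK htc) ▸
        (⟨⟨⟨hsK.1, hsOA⟩, hsK.2⟩, ⟨⟨hsK.1, hsOB⟩, hsK.2⟩⟩ : s ∈ A t ∩ B t))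
    have hnotB : (A z ∪ {z}) ∩ OB t = ∅ := by
      by_contra hne
      rw [← Ne, ← nonempty_iff_ne_empty] at hne
      have hmeets : ((A z ∪ {z}) ∩ OA t).Nonempty :=
        ⟨c, Or.inl (hcA z hz hzc), (hcA t htK htc).1.2⟩
      have := hApre z hz hzc (OA t) (OB t) (hOA t htK htc) (hOB t htK htc) hsub hmeets hne
      rw [hdisj2] at this
      exact this.ne_empty rfl
    intro s hs
    rcases hs with hsB | hsz
    · have hsK : s ∈ K := hsB.1.1
      have hsOB : s ∈ OB t := hsB.1.2
      have hsnA : s ∉ A z ∪ {z} := fun h =>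
        (notMem_empty s) (hnotB ▸ (⟨h, hsOB⟩ : s ∈ (A z ∪ {z}) ∩ OB t))
      have hsz : s ≠ z := fun h => hsnA (Or.inr (mem_singleton_iff.mpr h))
      have hsKz : s ∈ K \ {z} := ⟨hsK, hsz⟩
      rw [← hABu z hz hzc] at hsKz
      rcases hsKz with h | h
      · exact absurd (Or.inl h) hsnA
      · exact h
    · rw [mem_singleton_iff] at hsz
      subst hsz
      exact htB
  have hzorn : ∀ C ⊆ 𝒮, IsChain (· ⊆ ·) C → ∃ lb ∈ 𝒮, ∀ S ∈ C, lb ⊆ S := by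
    intro C hC𝒮 hchain
    rcases C.eq_empty_or_nonempty with rfl | hCne
    · exact ⟨B k ∪ {k}, hmem k hk hkc, by simp⟩
    have hTne : (⋂₀ C).Nonempty := by
      haveI : Nonempty C := hCne.to_subtype
      have hdir : Directed (· ⊇ ·) (fun S : C => (S : Set X)) := by
        intro S T
        rcases eq_or_ne (S : Set X) (T : Set X) with h | h
        · exact ⟨S, subset_refl _, by show (S:Set X) ⊆ T; rw [h]⟩
        rcases hchain S.2 T.2 h with h' | h'
        · exact ⟨S, subset_refl _, h'⟩
        · exact ⟨T, h', subset_refl _⟩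
      have hne : ∀ S : C, (S : Set X).Nonempty := by
        rintro ⟨S, hS⟩
        obtain ⟨z, _, _, rfl⟩ := hC𝒮 hS
        exact ⟨z, Or.inr rfl⟩
      have hcl : ∀ S : C, IsClosed (S : Set X) := by
        rintro ⟨S, hS⟩
        obtain ⟨z, hz, hzc, rfl⟩ := hC𝒮 hS
        exact hclosed z hz hzc
      have := IsCompact.nonempty_iInter_of_directed_nonempty_isCompact_isClosed
        (fun S : C => (S : Set X)) hdir hne (fun S => (hcl S).isCompact) hcl
      rwa [sInter_eq_iInter]
    obtain ⟨t, ht⟩ := hTne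
    obtain ⟨S₀, hS₀⟩ := hCne
    obtain ⟨z₀, hz₀K, hz₀c, hS₀eq⟩ := hC𝒮 hS₀
    have htS₀ : t ∈ S₀ := ht S₀ hS₀
    have htK : t ∈ K := hsubK' z₀ hz₀K (hS₀eq ▸ htS₀)
    have htc : t ≠ c := fun h => hcnotB z₀ hz₀K hz₀c (hS₀eq ▸ h ▸ htS₀)
    refine ⟨B t ∪ {t}, hmem t htK htc, ?_⟩
    intro S hS
    obtain ⟨z, hzK, hzc, rfl⟩ := hC𝒮 hS
    rcases ht _ hS with htB | hts
    · exact (nest z t hzK hzc htB).trans subset_union_left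
    · rw [mem_singleton_iff] at hts
      subst hts
      exact subset_refl _
  obtain ⟨M, hMmin⟩ := zorn_superset 𝒮 hzorn
  · obtain ⟨m, hm, hmc, hMeq⟩ := hMmin.1
    obtain ⟨w, hw⟩ := hBne m hm hmc
    have hwK : w ∈ K := hw.1.1
    have hwc : w ≠ c := fun h => hcnotB m hm hmc (Or.inl (h ▸ hw))
    have h1 : B w ∪ {w} ⊆ B m := nest m w hm hmc hw
    have h3 : B w ∪ {w} ⊆ M := by rw [hMeq]; exact h1.trans subset_union_left
    have hMle : M ⊆ B w ∪ {w} := hMmin.2 (hmem w hwK hwc) h3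
    have hmM : m ∈ M := by rw [hMeq]; exact Or.inr rfl
    have : m ∈ B m := h1 (hMle hmM)
    exact this.2 rfl
theorem exists_noncut_in_side {c : X} {U V : Set X} (h : SplitPt c U V) :
    ∃ z ∈ U, IsPreconnected ({z}ᶜ : Set X) := by
  obtain ⟨u0, hu0⟩ := h.nonempty_left
  have hu0c : u0 ≠ c := fun he => h.not_mem_left (he ▸ hu0)
  obtain ⟨z, hzS, hzc, hzpre⟩ := exists_noncut h.isClosed_side h.isPreconnected_side
    (c := c) (k := u0) (mem_union_right _ rfl) (Or.inl hu0) hu0c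
  have hzU : z ∈ U := by
    rcases hzS with h' | h'
    · exact h'
    · exact absurd (mem_singleton_iff.mp h') hzc
  refine ⟨z, hzU, ?_⟩
  have hcompl : ({z}ᶜ : Set X) = ((U ∪ {c}) \ {z}) ∪ (V ∪ {c}) := by
    ext t
    simp only [mem_compl_iff, mem_singleton_iff, mem_union, mem_diff]
    constructor
    · intro htz
      by_cases htc : t = c
      · exact Or.inr (Or.inr htc)
      · rcases h.mem_or htc with ht | ht
        · exact Or.inl ⟨Or.inl ht, htz⟩
        · exact Or.inr (Or.inl ht)
    · rintro (⟨_, htz⟩ | ht)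
      · exact htz
      · rintro rfl
        rcases ht with ht | ht
        · exact h.disjoint.ne_of_mem hzU ht rfl
        · exact hzc ht
  rw [hcompl]
  refine IsPreconnected.union c ⟨mem_union_right _ rfl, ?_⟩ (mem_union_right _ rfl)
    hzpre h.symm.isPreconnected_side
  simp only [mem_singleton_iff]
  exact fun hce => hzc hce.symm

theorem isPreconnected_sInter_chain {C : Set (Set X)} (hCne : C.Nonempty)
    (hcl : ∀ S ∈ C, IsClosed S) (hpc : ∀ S ∈ C, IsPreconnected S)
    (hchain : IsChain (· ⊆ ·) C) : IsPreconnected (⋂₀ C) := by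
  intro u v hu hv hcov h1 h2
  by_contra hcon
  set T := ⋂₀ C with hT
  have hemp : T ∩ (u ∩ v) = ∅ := not_nonempty_iff_eq_empty.mp hcon
  have hTcl : IsClosed T := isClosed_sInter hcl
  have hAcl : IsClosed (T \ v) := hTcl.inter (isClosed_compl_iff.mpr hv)
  have hBcl : IsClosed (T \ u) := hTcl.inter (isClosed_compl_iff.mpr hu)
  have hdAB : Disjoint (T \ v) (T \ u) := by
    rw [Set.disjoint_left]
    rintro t ⟨htT, htv⟩ ⟨_, htu⟩
    rcases hcov htT with h' | h'
    · exact htu h'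
    · exact htv h'
  obtain ⟨u', v', hu', hv', hsub1, hsub2, hdisj⟩ :=
    NormalSpace.normal (T \ v) (T \ u) hAcl hBcl hdAB
  have hKex : ∃ S ∈ C, S ⊆ u' ∪ v' := by
    by_contra hnex
    push_neg at hnex
    haveI : Nonempty C := hCne.to_subtype
    have hdir : Directed (· ⊇ ·) (fun S : C => (S : Set X) \ (u' ∪ v')) := by
      intro S T'
      rcases eq_or_ne (S : Set X) (T' : Set X) with h | h
      · refine ⟨S, subset_refl _, ?_⟩
        show (S : Set X) \ (u' ∪ v') ⊆ (T' : Set X) \ (u' ∪ v')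
        rw [h]
      rcases hchain S.2 T'.2 h with h' | h'
      · exact ⟨S, subset_refl _, diff_subset_diff_left h'⟩
      · exact ⟨T', diff_subset_diff_left h', subset_refl _⟩
    have hne : ∀ S : C, ((S : Set X) \ (u' ∪ v')).Nonempty := by
      rintro ⟨S, hS⟩
      have h' := hnex S hS
      rw [not_subset] at h'
      obtain ⟨t, htS, htn⟩ := h'
      exact ⟨t, htS, htn⟩
    have hclS : ∀ S : C, IsClosed ((S : Set X) \ (u' ∪ v')) :=
      fun S => (hcl S S.2).inter (isClosed_compl_iff.mpr (hu'.union hv'))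
    obtain ⟨t, ht⟩ := IsCompact.nonempty_iInter_of_directed_nonempty_isCompact_isClosed
      (fun S : C => (S : Set X) \ (u' ∪ v')) hdir hne (fun S => (hclS S).isCompact) hclS
    simp only [mem_iInter, mem_diff] at ht
    have htT : t ∈ T := mem_sInter.mpr (fun S hS => (ht ⟨S, hS⟩).1)
    have htn : t ∉ u' ∪ v' := (ht ⟨hCne.choose, hCne.choose_spec⟩).2
    rcases hcov htT with h' | h'
    · by_cases htv : t ∈ v
      · exact (notMem_empty t) (hemp ▸ (⟨htT, h', htv⟩ : t ∈ T ∩ (u ∩ v)))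
      · exact htn (Or.inl (hsub1 ⟨htT, htv⟩))
    · by_cases htu : t ∈ u
      · exact (notMem_empty t) (hemp ▸ (⟨htT, htu, h'⟩ : t ∈ T ∩ (u ∩ v)))
      · exact htn (Or.inr (hsub2 ⟨htT, htu⟩))
  obtain ⟨S, hSC, hSsub⟩ := hKex
  obtain ⟨p, hpT, hpu⟩ := h1
  obtain ⟨q, hqT, hqv⟩ := h2
  have hpu' : p ∈ u' := hsub1 ⟨hpT, fun hpv =>
    (notMem_empty p) (hemp ▸ (⟨hpT, hpu, hpv⟩ : p ∈ T ∩ (u ∩ v)))⟩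
  have hqv' : q ∈ v' := hsub2 ⟨hqT, fun hqu =>
    (notMem_empty q) (hemp ▸ (⟨hqT, hqu, hqv⟩ : q ∈ T ∩ (u ∩ v)))⟩
  obtain ⟨t, _, htu', htv'⟩ := hpc S hSC u' v' hu' hv' hSsub
    ⟨p, hpT S hSC, hpu'⟩ ⟨q, hqT S hSC, hqv'⟩
  exact (notMem_empty t) ((Set.disjoint_iff_inter_eq_empty.mp hdisj) ▸
    (⟨htu', htv'⟩ : t ∈ u' ∩ v'))

theorem not_countable_of_preconn {K : Set X} (hpc : IsPreconnected K) {a b : X} (ha : a ∈ K)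
    (hb : b ∈ K) (hab : a ≠ b) : ¬ K.Countable := by
  intro hcount
  obtain ⟨f, hf0, hf1, _⟩ := exists_continuous_zero_one_of_isClosed
    (isClosed_singleton (x := a)) (isClosed_singleton (x := b))
    (by simp [Set.disjoint_singleton_left, hab])
  have hIcc : Icc (f a) (f b) ⊆ f '' K :=
    hpc.intermediate_value ha hb f.continuous.continuousOn
  have hfa : f a = 0 := hf0 rfl
  have hfb : f b = 1 := hf1 rfl
  rw [hfa, hfb] at hIcc
  have hc2 : (Icc (0:ℝ) 1).Countable := (hcount.image f).mono hIcc
  have := hc2.to_subtype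
  have h1 : (Cardinal.mk (Icc (0:ℝ) 1)) ≤ Cardinal.aleph0 := Cardinal.mk_le_aleph0
  rw [Cardinal.mk_Icc_real one_pos] at h1
  exact (Cardinal.aleph0_lt_continuum.not_ge) h1

theorem exists_separator
    (hcount : ({x : X | IsPreconnected ({x}ᶜ : Set X)}).Countable)
    {a b : X} (hab : a ≠ b) :
    ∃ c U V, SplitPt c U V ∧ a ∈ U ∧ b ∈ V := by
  classical
  by_contra hno
  push_neg at hno
  set N := {x : X | IsPreconnected ({x}ᶜ : Set X)} with hN
  set 𝒦 : Set (Set X) := {K | IsClosed K ∧ IsPreconnected K ∧ a ∈ K ∧ b ∈ K} with h𝒦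
  have hzorn : ∀ C ⊆ 𝒦, IsChain (· ⊆ ·) C → ∃ lb ∈ 𝒦, ∀ S ∈ C, lb ⊆ S := by
    intro C hC hchain
    rcases C.eq_empty_or_nonempty with rfl | hCne
    · exact ⟨univ, ⟨isClosed_univ, isPreconnected_univ, mem_univ a, mem_univ b⟩, by simp⟩
    refine ⟨⋂₀ C, ⟨isClosed_sInter (fun S hS => (hC hS).1),
      isPreconnected_sInter_chain hCne (fun S hS => (hC hS).1) (fun S hS => (hC hS).2.1) hchain,
      mem_sInter.mpr (fun S hS => (hC hS).2.2.1),
      mem_sInter.mpr (fun S hS => (hC hS).2.2.2)⟩,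
      fun S hS => sInter_subset_of_mem hS⟩
  obtain ⟨L, hLmin⟩ := zorn_superset 𝒦 hzorn
  obtain ⟨hLcl, hLpc, haL, hbL⟩ := hLmin.1
  have hmain : ∀ x, x ∈ L → x ∉ N → x ≠ a → x ≠ b → ∃ U V p,
      SplitPt x U V ∧ a ∈ U ∧ b ∈ U ∧ L ∩ V = ∅ ∧ p ∈ V ∧ p ∈ N := by
    intro x hxL hxN hxa hxb
    obtain ⟨U0, V0, hsp0⟩ := splitPt_of_not_preconn hxN
    have haor : a ∈ U0 ∨ a ∈ V0 := hsp0.mem_or (Ne.symm hxa)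
    obtain ⟨U, V, hsp, haU⟩ : ∃ U V, SplitPt x U V ∧ a ∈ U := by
      rcases haor with h | h
      · exact ⟨U0, V0, hsp0, h⟩
      · exact ⟨V0, U0, hsp0.symm, h⟩
    have hbU : b ∈ U := by
      rcases hsp.mem_or (Ne.symm hxb) with h | h
      · exact h
      · exact absurd h (hno x U V hsp haU)
    have hABu : ((L ∩ U) \ {x}) ∪ ((L ∩ V) \ {x}) = L \ {x} := by
      ext t
      constructor
      · rintro (⟨⟨h1, _⟩, h3⟩ | ⟨⟨h1, _⟩, h3⟩) <;> exact ⟨h1, h3⟩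
      · rintro ⟨h1, h3⟩
        rcases hsp.mem_or h3 with h | h
        · exact Or.inl ⟨⟨h1, h⟩, h3⟩
        · exact Or.inr ⟨⟨h1, h⟩, h3⟩
    have hABd : ((L ∩ U) \ {x}) ∩ ((L ∩ V) \ {x}) = ∅ := by
      ext t
      simp only [mem_inter_iff, mem_diff, mem_empty_iff_false, iff_false, not_and]
      intro h1 h2
      obtain ⟨_, htU, _⟩ : t ∈ L ∧ t ∈ U ∧ ¬ t = x := by tauto
      obtain ⟨_, htV, _⟩ : t ∈ L ∧ t ∈ V ∧ ¬ t = x := by tauto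
      exact absurd rfl (hsp.disjoint.ne_of_mem htU htV)
    have hLV : L ∩ V = ∅ := by
      by_contra hne
      rw [← Ne, ← nonempty_iff_ne_empty] at hne
      obtain ⟨w, hwL, hwV⟩ := hne
      have hS𝒦 : (((L ∩ U) \ {x}) ∪ {x}) ∈ 𝒦 :=
        ⟨rel_closed hLcl hsp.isOpen_right hABu hABd hxL,
         rel_preconn hLcl hLpc hsp.isOpen_left hsp.isOpen_right hABu hABd hxL,
         Or.inl ⟨⟨haL, haU⟩, Ne.symm hxa⟩, Or.inl ⟨⟨hbL, hbU⟩, Ne.symm hxb⟩⟩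
      have hsubL : ((L ∩ U) \ {x}) ∪ {x} ⊆ L := by
        rintro t (ht | ht)
        · exact ht.1.1
        · exact (mem_singleton_iff.mp ht) ▸ hxL
      have hLsub : L ⊆ ((L ∩ U) \ {x}) ∪ {x} := hLmin.2 hS𝒦 hsubL
      rcases hLsub hwL with h | h
      · exact absurd rfl (hsp.disjoint.ne_of_mem h.1.2 hwV)
      · exact hsp.not_mem_right ((mem_singleton_iff.mp h) ▸ hwV)
    obtain ⟨p, hpV, hpN⟩ := exists_noncut_in_side hsp.symm
    exact ⟨U, V, p, hsp, haU, hbU, hLV, hpV, hpN⟩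
  choose! U V p hsp haU hbU hLV hpV hpN using hmain
  set dom := L \ ({a, b} ∪ N) with hdom
  have hdomfacts : ∀ x ∈ dom, x ∈ L ∧ x ∉ N ∧ x ≠ a ∧ x ≠ b := by
    intro x hx
    rw [hdom, mem_diff] at hx
    obtain ⟨hxL, hx2⟩ := hx
    simp only [mem_union, mem_insert_iff, mem_singleton_iff, not_or] at hx2
    exact ⟨hxL, hx2.2, hx2.1.1, hx2.1.2⟩
  have hinj : ∀ x ∈ dom, ∀ y ∈ dom, p x = p y → x = y := by
    intro x hx y hy hpxy
    obtain ⟨hxL, hxN, hxa, hxb⟩ := hdomfacts x hx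
    obtain ⟨hyL, hyN, hya, hyb⟩ := hdomfacts y hy
    by_contra hxy
    have hspx := hsp x hxL hxN hxa hxb
    have hspy := hsp y hyL hyN hya hyb
    have hyUx : y ∈ U x := by
      rcases hspx.mem_or (Ne.symm hxy) with h | h
      · exact h
      · exact absurd ((hLV x hxL hxN hxa hxb) ▸ (⟨hyL, h⟩ : y ∈ L ∩ V x)) (notMem_empty y)
    have hxUy : x ∈ U y := by
      rcases hspy.mem_or hxy with h | h
      · exact h
      · exact absurd ((hLV y hyL hyN hya hyb) ▸ (⟨hxL, h⟩ : x ∈ L ∩ V y)) (notMem_empty x)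
    have hpre : IsPreconnected (V x ∪ {x}) := hspx.symm.isPreconnected_side
    have heS : y ∉ V x ∪ {x} := by
      rintro (h | h)
      · exact absurd rfl (hspx.disjoint.ne_of_mem hyUx h)
      · exact hxy ((mem_singleton_iff.mp h).symm)
    have hpVy : p x ∈ V y := by rw [hpxy]; exact hpV y hyL hyN hya hyb
    have hsub : V x ∪ {x} ⊆ V y :=
      subset_side hspy.symm hpre heS (Or.inl (hpV x hxL hxN hxa hxb)) hpVy
    have : x ∈ V y := hsub (Or.inr rfl)
    exact absurd rfl (hspy.disjoint.ne_of_mem hxUy this)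
  have hdomct : dom.Countable := by
    haveI : Countable N := hcount.to_subtype
    have : Countable dom := by
      refine Function.Injective.countable
        (f := fun t : dom => (⟨p t, hpN t (hdomfacts t t.2).1 (hdomfacts t t.2).2.1
          (hdomfacts t t.2).2.2.1 (hdomfacts t t.2).2.2.2⟩ : N)) ?_
      rintro ⟨s, hs⟩ ⟨t, ht⟩ h
      simp only [Subtype.mk.injEq] at h ⊢
      exact hinj s hs t ht h
    exact countable_coe_iff.mp this
  have hLct : L.Countable := by
    have hsub : L ⊆ ({a, b} ∪ N) ∪ dom := by
      intro t ht
      by_cases h : t ∈ {a, b} ∪ N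
      · exact Or.inl h
      · exact Or.inr ⟨ht, h⟩
    refine Countable.mono hsub ?_
    exact (((countable_singleton b).insert a).union hcount).union hdomct
  exact not_countable_of_preconn hLpc haL hbL hab hLct

end Stmt15Aux

open Stmt15Aux

/-- Every separable Hausdorff continuum with only countably many non-cut points is a
dendrite: it is metrizable and any two distinct points are separated by a third point. -/
theorem stmt_15 {X : Type*} [TopologicalSpace X] [CompactSpace X] [T2Space X]
    [ConnectedSpace X] [TopologicalSpace.SeparableSpace X]
    (hcount : ({x : X | IsPreconnected ({x}ᶜ : Set X)}).Countable) :
    TopologicalSpace.MetrizableSpace X ∧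
      ∀ a b : X, a ≠ b → ∃ c : X, ∃ U V : Set X, IsOpen U ∧ IsOpen V ∧ Disjoint U V ∧
        U ∪ V = ({c}ᶜ : Set X) ∧ a ∈ U ∧ b ∈ V := by
  classical
  have hsep : ∀ x y : X, x ≠ y → ∃ c U V, SplitPt c U V ∧ x ∈ U ∧ y ∈ V :=
    fun x y hxy => exists_separator hcount hxy
  refine ⟨?_, ?_⟩
  swap
  · intro a b hab
    obtain ⟨c, U, V, hsp, ha, hb⟩ := hsep a b hab
    exact ⟨c, U, V, hsp.isOpen_left, hsp.isOpen_right, hsp.disjoint, hsp.union_eq, ha, hb⟩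
  obtain ⟨D, hDc, hDd⟩ := TopologicalSpace.exists_countable_dense X
  set N := {x : X | IsPreconnected ({x}ᶜ : Set X)} with hN
  set I : Set (X × X × X × X) := {q | (q.1 ∈ N ∧ q.2.1 ∈ N ∧ q.2.2.1 ∈ D ∧ q.2.2.2 ∈ D) ∧
      ∃ e P Q, SplitPt e P Q ∧ q.1 ∈ P ∧ q.2.2.1 ∈ P ∧ q.2.1 ∈ Q ∧ q.2.2.2 ∈ Q} with hI
  have hIc : I.Countable := by
    have hsub : I ⊆ N ×ˢ (N ×ˢ (D ×ˢ D)) := by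
      rintro ⟨n, n', d, d'⟩ ⟨⟨h1, h2, h3, h4⟩, -⟩
      exact ⟨h1, h2, h3, h4⟩
    exact Countable.mono hsub (hcount.prod (hcount.prod (hDc.prod hDc)))
  have hdata : ∀ q, q ∈ I → ∃ e P Q, SplitPt e P Q ∧
      q.1 ∈ P ∧ q.2.2.1 ∈ P ∧ q.2.1 ∈ Q ∧ q.2.2.2 ∈ Q := fun q hq => hq.2
  choose! e P Q hePQ hnP hdP hn'Q hd'Q using hdata
  have key : ∀ x y : X, x ≠ y → ∃ q ∈ I, x ∈ P q ∧ y ∈ Q q := by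
    intro x y hxy
    obtain ⟨c, U, V, hc, hxU, hyV⟩ := hsep x y hxy
    have hxc : x ≠ c := fun h => hc.not_mem_left (h ▸ hxU)
    obtain ⟨c₁, U₁, V₁, hc₁, hxU₁, hcV₁⟩ := hsep x c hxc
    have hxc₁ : x ≠ c₁ := fun h => hc₁.not_mem_left (h ▸ hxU₁)
    obtain ⟨c₀, U₀, V₀, hc₀, hxU₀, hc₁V₀⟩ := hsep x c₁ hxc₁
    have hyc : y ≠ c := fun h => hc.not_mem_right (h ▸ hyV)
    obtain ⟨c₂, V₂, U₂, hc₂, hyV₂, hcU₂⟩ := hsep y c hyc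
    have hyc₂ : y ≠ c₂ := fun h => hc₂.not_mem_left (h ▸ hyV₂)
    obtain ⟨c₃, V₃, U₃, hc₃, hyV₃, hc₂U₃⟩ := hsep y c₂ hyc₂
    have hcc₁ : c ≠ c₁ := fun h => hc₁.not_mem_right (h ▸ hcV₁)
    have hcc₂ : c ≠ c₂ := fun h => hc₂.not_mem_right (h ▸ hcU₂)
    have hc₁c₀ : c₁ ≠ c₀ := fun h => hc₀.not_mem_right (h ▸ hc₁V₀)
    have hc₂c₃ : c₂ ≠ c₃ := fun h => hc₃.not_mem_right (h ▸ hc₂U₃)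
    have hD1 : U₁ ∪ {c₁} ⊆ U := by
      refine subset_side hc hc₁.isPreconnected_side ?_ (Or.inl hxU₁) hxU
      rintro (h | h)
      · exact hc₁.disjoint.ne_of_mem h hcV₁ rfl
      · exact hcc₁ (mem_singleton_iff.mp h)
    have hc₁U : c₁ ∈ U := hD1 (Or.inr rfl)
    have hD2 : V ∪ {c} ⊆ V₁ := by
      refine subset_side hc₁.symm hc.symm.isPreconnected_side ?_ (Or.inr rfl) hcV₁
      rintro (h | h)
      · exact hc.disjoint.ne_of_mem hc₁U h rfl
      · exact hcc₁ (mem_singleton_iff.mp h).symm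
    have hD3 : U₀ ∪ {c₀} ⊆ U₁ := by
      refine subset_side hc₁ hc₀.isPreconnected_side ?_ (Or.inl hxU₀) hxU₁
      rintro (h | h)
      · exact hc₀.disjoint.ne_of_mem h hc₁V₀ rfl
      · exact hc₁c₀ (mem_singleton_iff.mp h)
    have hD4 : V₂ ∪ {c₂} ⊆ V := by
      refine subset_side hc.symm hc₂.isPreconnected_side ?_ (Or.inl hyV₂) hyV
      rintro (h | h)
      · exact hc₂.disjoint.ne_of_mem h hcU₂ rfl
      · exact hcc₂ (mem_singleton_iff.mp h)
    have hc₂V : c₂ ∈ V := hD4 (Or.inr rfl)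
    have hxU₂ : x ∈ U₂ := by
      have hxc₂ : x ≠ c₂ := fun h => hc.disjoint.ne_of_mem hxU (h ▸ hc₂V) rfl
      rcases hc₂.mem_or hxc₂ with h | h
      · exact absurd rfl (hc.disjoint.ne_of_mem hxU (hD4 (Or.inl h)))
      · exact h
    have hD5 : U ∪ {c} ⊆ U₂ := by
      refine subset_side hc₂.symm hc.isPreconnected_side ?_ (Or.inl hxU) hxU₂
      rintro (h | h)
      · exact hc.disjoint.ne_of_mem h hc₂V rfl
      · exact hcc₂ (mem_singleton_iff.mp h).symm
    have hD6 : V₃ ∪ {c₃} ⊆ V₂ := by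
      refine subset_side hc₂ hc₃.isPreconnected_side ?_ (Or.inl hyV₃) hyV₂
      rintro (h | h)
      · exact hc₃.disjoint.ne_of_mem h hc₂U₃ rfl
      · exact hc₂c₃ (mem_singleton_iff.mp h)
    have hc₃V₂ : c₃ ∈ V₂ := hD6 (Or.inr rfl)
    obtain ⟨d, hdD, hdV₁, hdU⟩ : ∃ d, d ∈ D ∧ d ∈ V₁ ∧ d ∈ U := by
      have hop : IsOpen (V₁ ∩ U) := hc₁.isOpen_right.inter hc.isOpen_left
      have hne : (V₁ ∩ U).Nonempty := by
        obtain ⟨t, ht1, ht2⟩ := mem_closure_iff.mp hc.mem_closure_left V₁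
          hc₁.isOpen_right hcV₁
        exact ⟨t, ht1, ht2⟩
      obtain ⟨d, hdD, hd⟩ := hDd.exists_mem_open hop hne
      exact ⟨d, hdD, hd.1, hd.2⟩
    obtain ⟨d', hd'D, hd'U₂, hd'V⟩ : ∃ d', d' ∈ D ∧ d' ∈ U₂ ∧ d' ∈ V := by
      have hop : IsOpen (U₂ ∩ V) := hc₂.isOpen_right.inter hc.isOpen_right
      have hne : (U₂ ∩ V).Nonempty := by
        obtain ⟨t, ht1, ht2⟩ := mem_closure_iff.mp hc.symm.mem_closure_left U₂
          hc₂.isOpen_right hcU₂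
        exact ⟨t, ht1, ht2⟩
      obtain ⟨d', hdD, hd⟩ := hDd.exists_mem_open hop hne
      exact ⟨d', hdD, hd.1, hd.2⟩
    obtain ⟨n, hnU₀, hnN⟩ := exists_noncut_in_side hc₀
    obtain ⟨n', hn'V₃, hn'N⟩ := exists_noncut_in_side hc₃
    have hnU₁ : n ∈ U₁ := hD3 (Or.inl hnU₀)
    have hnU : n ∈ U := hD1 (Or.inl hnU₁)
    have hn'V₂ : n' ∈ V₂ := hD6 (Or.inl hn'V₃)
    have hn'V : n' ∈ V := hD4 (Or.inl hn'V₂)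
    have hqI : (n, n', d, d') ∈ I :=
      ⟨⟨hnN, hn'N, hdD, hd'D⟩, c, U, V, hc, hnU, hdU, hn'V, hd'V⟩
    refine ⟨(n, n', d, d'), hqI, ?_⟩
    have hE : SplitPt (e (n, n', d, d')) (P (n, n', d, d')) (Q (n, n', d, d')) := hePQ _ hqI
    have hnPq : n ∈ P (n, n', d, d') := hnP _ hqI
    have hdPq : d ∈ P (n, n', d, d') := hdP _ hqI
    have hn'Qq : n' ∈ Q (n, n', d, d') := hn'Q _ hqI
    have hd'Qq : d' ∈ Q (n, n', d, d') := hd'Q _ hqI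
    set E := e (n, n', d, d') with hEdef
    set PP := P (n, n', d, d') with hPPdef
    set QQ := Q (n, n', d, d') with hQQdef
    have linkP : ∀ S : Set X, IsPreconnected S → E ∉ S → n ∈ S → S ⊆ PP :=
      fun S hS he hn => subset_side hE hS he hn hnPq
    have linkQ : ∀ S : Set X, IsPreconnected S → E ∉ S → n' ∈ S → S ⊆ QQ :=
      fun S hS he hn' => subset_side hE.symm hS he hn' hn'Qq
    have linkF : ∀ S : Set X, IsPreconnected S → E ∉ S → d ∈ S → d' ∈ S → False :=
      fun S hS he h1 h2 =>
        hE.disjoint.ne_of_mem ((subset_side hE hS he h1 hdPq) h2) hd'Qq rfl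
    have hzones : E ∈ U₁ ∨ E = c₁ ∨ E ∈ V₁ ∩ U ∨ E = c ∨ E ∈ U₂ ∩ V ∨ E = c₂ ∨ E ∈ V₂ := by
      by_cases h0 : E = c
      · exact Or.inr (Or.inr (Or.inr (Or.inl h0)))
      rcases hc.mem_or h0 with hU | hV
      · by_cases h1 : E = c₁
        · exact Or.inr (Or.inl h1)
        rcases hc₁.mem_or h1 with h | h
        · exact Or.inl h
        · exact Or.inr (Or.inr (Or.inl ⟨h, hU⟩))
      · by_cases h2 : E = c₂
        · exact Or.inr (Or.inr (Or.inr (Or.inr (Or.inr (Or.inl h2)))))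
        rcases hc₂.mem_or h2 with h | h
        · exact Or.inr (Or.inr (Or.inr (Or.inr (Or.inr (Or.inr h)))))
        · exact Or.inr (Or.inr (Or.inr (Or.inr (Or.inl ⟨h, hV⟩))))
    rcases hzones with h | h | h | h | h | h | h
    · refine ((linkF (V₁ ∪ {c₁}) hc₁.symm.isPreconnected_side ?_ (Or.inl hdV₁)
        (Or.inl (hD2 (Or.inl hd'V))))).elim
      rintro (h' | h')
      · exact hc₁.disjoint.ne_of_mem h h' rfl
      · exact hc₁.not_mem_left ((mem_singleton_iff.mp h') ▸ h)
    · constructor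
      · refine (linkP (U₀ ∪ {c₀}) hc₀.isPreconnected_side ?_ (Or.inl hnU₀)) (Or.inl hxU₀)
        rw [h]
        rintro (h' | h')
        · exact hc₀.disjoint.ne_of_mem h' hc₁V₀ rfl
        · exact hc₁c₀ (mem_singleton_iff.mp h')
      · refine (linkQ (V ∪ {c}) hc.symm.isPreconnected_side ?_ (Or.inl hn'V)) (Or.inl hyV)
        rw [h]
        rintro (h' | h')
        · exact hc.disjoint.ne_of_mem hc₁U h' rfl
        · exact hcc₁ (mem_singleton_iff.mp h').symm
    · constructor
      · refine (linkP (U₁ ∪ {c₁}) hc₁.isPreconnected_side ?_ (Or.inl hnU₁)) (Or.inl hxU₁)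
        rintro (h' | h')
        · exact hc₁.disjoint.ne_of_mem h' h.1 rfl
        · exact hc₁.not_mem_right ((mem_singleton_iff.mp h') ▸ h.1)
      · refine (linkQ (V ∪ {c}) hc.symm.isPreconnected_side ?_ (Or.inl hn'V)) (Or.inl hyV)
        rintro (h' | h')
        · exact hc.disjoint.ne_of_mem h.2 h' rfl
        · exact hc.not_mem_left ((mem_singleton_iff.mp h') ▸ h.2)
    · constructor
      · refine (linkP (U₁ ∪ {c₁}) hc₁.isPreconnected_side ?_ (Or.inl hnU₁)) (Or.inl hxU₁)
        rw [h]
        rintro (h' | h')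
        · exact hc₁.disjoint.ne_of_mem h' hcV₁ rfl
        · exact hcc₁ (mem_singleton_iff.mp h')
      · refine (linkQ (V₂ ∪ {c₂}) hc₂.isPreconnected_side ?_ (Or.inl hn'V₂)) (Or.inl hyV₂)
        rw [h]
        rintro (h' | h')
        · exact hc₂.disjoint.ne_of_mem h' hcU₂ rfl
        · exact hcc₂ (mem_singleton_iff.mp h')
    · constructor
      · refine (linkP (U ∪ {c}) hc.isPreconnected_side ?_ (Or.inl hnU)) (Or.inl hxU)
        rintro (h' | h')
        · exact hc.disjoint.ne_of_mem h' h.2 rfl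
        · exact hc.not_mem_right ((mem_singleton_iff.mp h') ▸ h.2)
      · refine (linkQ (V₂ ∪ {c₂}) hc₂.isPreconnected_side ?_ (Or.inl hn'V₂)) (Or.inl hyV₂)
        rintro (h' | h')
        · exact hc₂.disjoint.ne_of_mem h' h.1 rfl
        · exact hc₂.not_mem_right ((mem_singleton_iff.mp h') ▸ h.1)
    · constructor
      · refine (linkP (U ∪ {c}) hc.isPreconnected_side ?_ (Or.inl hnU)) (Or.inl hxU)
        rw [h]
        rintro (h' | h')
        · exact hc.disjoint.ne_of_mem h' hc₂V rfl
        · exact hcc₂ (mem_singleton_iff.mp h').symm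
      · refine (linkQ (V₃ ∪ {c₃}) hc₃.isPreconnected_side ?_ (Or.inl hn'V₃)) (Or.inl hyV₃)
        rw [h]
        rintro (h' | h')
        · exact hc₃.disjoint.ne_of_mem h' hc₂U₃ rfl
        · exact hc₂c₃ (mem_singleton_iff.mp h')
    · refine ((linkF (U₂ ∪ {c₂}) hc₂.symm.isPreconnected_side ?_
        (Or.inl (hD5 (Or.inl hdU))) (Or.inl hd'U₂))).elim
      rintro (h' | h')
      · exact hc₂.disjoint.ne_of_mem h h' rfl
      · exact hc₂.not_mem_left ((mem_singleton_iff.mp h') ▸ h)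
  -- countable subbasis and metrizability
  set F : Set (Set X) := (P '' I) ∪ (Q '' I) with hF
  have hFc : F.Countable := (hIc.image P).union (hIc.image Q)
  have hFo : ∀ s ∈ F, IsOpen s := by
    rintro s (⟨q, hq, rfl⟩ | ⟨q, hq, rfl⟩)
    exacts [(hePQ q hq).isOpen_left, (hePQ q hq).isOpen_right]
  have hle : (inferInstance : TopologicalSpace X) ≤ TopologicalSpace.generateFrom F :=
    le_generateFrom hFo
  have ht2 : @T2Space X (TopologicalSpace.generateFrom F) := by
    refine @T2Space.mk X (TopologicalSpace.generateFrom F) ?_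
    intro p q hpq
    obtain ⟨r, hrI, hpP, hqQ⟩ := key p q hpq
    exact ⟨P r, Q r, TopologicalSpace.isOpen_generateFrom_of_mem (Or.inl ⟨r, hrI, rfl⟩),
      TopologicalSpace.isOpen_generateFrom_of_mem (Or.inr ⟨r, hrI, rfl⟩),
      hpP, hqQ, (hePQ r hrI).disjoint⟩
  have heq : (inferInstance : TopologicalSpace X) = TopologicalSpace.generateFrom F := by
    apply le_antisymm hle
    rw [TopologicalSpace.le_def]
    intro s hs
    have h1 : IsCompact sᶜ := (isClosed_compl_iff.mpr hs).isCompact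
    have hcont : @Continuous X X inferInstance (TopologicalSpace.generateFrom F) id :=
      continuous_id_of_le hle
    have h2 : @IsCompact X (TopologicalSpace.generateFrom F) sᶜ := by
      have h2' := @IsCompact.image X X inferInstance (TopologicalSpace.generateFrom F) sᶜ id h1 hcont
      rwa [Set.image_id] at h2'
    have h3 : @IsClosed X (TopologicalSpace.generateFrom F) sᶜ :=
      @IsCompact.isClosed X (TopologicalSpace.generateFrom F) ht2 _ h2
    exact (@isClosed_compl_iff X (TopologicalSpace.generateFrom F) s).mp h3
  haveI hsc : SecondCountableTopology X := by
    have hbasis := TopologicalSpace.isTopologicalBasis_of_subbasis heq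
    exact hbasis.secondCountableTopology ((countable_setOf_finite_subset hFc).image _)
  exact inferInstance
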